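/- Let a, b, c be real numbers with b ≠ 2a², and set η := (3/5)(4a² − b), μ := c(b − 2a²), ν := 8a⁶ − 3a⁴b − (2/3)c². Then ς := 2a² satisfies 5η − 3ς = −3(b − 2a²) ≠ 0 and is a solution of the quintic equation P(ς; η, μ, ν) = 0. -/

import Mathlib

/-- The quintic function P(ς; η, μ, ν) := ν + (1/2)ς³ − (5/4)ης² + 6μ²/(5η − 3ς)². -/
noncomputable def Pquintic (ς η μ ν : ℝ) : ℝ :=
  ν + (1/2) * ς^3 - (5/4) * η * ς^2 + 6 * μ^2 / (5*η - 3*ς)^2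

/-- For real a, b, c with b ≠ 2a², setting η = (3/5)(4a² − b), μ = c(b − 2a²),
ν = 8a⁶ − 3a⁴b − (2/3)c², the value ς = 2a² satisfies 5η − 3ς = −3(b − 2a²) ≠ 0 and
solves the quintic P(ς; η, μ, ν) = 0. -/
theorem stmt_1 (a b c : ℝ) (h : b ≠ 2*a^2) :
    5 * ((3/5)*(4*a^2 - b)) - 3 * (2*a^2) = -3*(b - 2*a^2) ∧
    -3*(b - 2*a^2) ≠ 0 ∧
    Pquintic (2*a^2) ((3/5)*(4*a^2 - b)) (c*(b - 2*a^2)) (8*a^6 - 3*a^4*b - (2/3)*c^2) = 0 := by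
  have hne : b - 2*a^2 ≠ 0 := sub_ne_zero.mpr h
  refine ⟨by ring, by simpa using hne, ?_⟩
  unfold Pquintic
  have h2 : (5*((3/5)*(4*a^2 - b)) - 3*(2*a^2))^2 = 9*(b - 2*a^2)^2 := by ring
  rw [h2]
  have h9 : (9:ℝ)*(b - 2*a^2)^2 ≠ 0 := by positivity
  field_simp
  rw [mul_div_assoc, div_self (by intro h'; apply hne; linarith)]
  ring
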